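/- arXiv:1010.5454 — 2 statements merged into one kernel-verified Lean document; each statement's English description precedes it below -/
import Mathlib

section
/- Every translation-bi-invariant closed subspace F of l^∞(ℕ₀, X) (i.e., a nontrivial closed subspace with S^{-1}(F) = F, where S is the shift operator) contains c₀(ℕ₀, X), the space of sequences converging to 0. -/
noncomputable section
open Filter Topology Metric Set

variable (X : Type*) [NormedAddCommGroup X] [NormedSpace ℂ X]

/-- `l^∞(ℕ₀, X)`, bounded `X`-valued sequences with sup norm. -/
abbrev Linf := lp (fun _ : ℕ => X) ⊤

/-- The shift (translation) operator on `l^∞` as a linear map. -/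
def shiftl : Linf X →ₗ[ℂ] Linf X where
  toFun x := ⟨fun n => x (n + 1), memℓp_infty (by
    obtain ⟨C, hC⟩ := (memℓp_infty_iff.1 (lp.memℓp x))
    exact ⟨C, by rintro - ⟨n, rfl⟩; exact hC ⟨n + 1, rfl⟩⟩)⟩
  map_add' x y := by ext n; simp [lp.coeFn_add] <;> rfl
  map_smul' c x := by ext n; simp [lp.coeFn_smul]

@[simp] lemma shiftl_apply (x : Linf X) (n : ℕ) : (shiftl X x : ∀ _ : ℕ, X) n = x (n + 1) := rfl

/-- The shift operator on `l^∞` as a continuous linear map. -/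
def shiftL : Linf X →L[ℂ] Linf X :=
  (shiftl X).mkContinuous 1 (fun x => by
    rw [one_mul]
    exact lp.norm_le_of_forall_le (norm_nonneg x) fun n =>
      lp.norm_apply_le_norm ENNReal.top_ne_zero x (n + 1))

/-- `c₀(ℕ₀, X)`, the subspace of sequences tending to `0`. -/
def c0 : Submodule ℂ (Linf X) where
  carrier := {x | Tendsto (fun n => x n) atTop (nhds 0)}
  zero_mem' := by simpa [lp.coeFn_zero] using tendsto_const_nhds
  add_mem' := by
    intro a b ha hb
    have := ha.add hb
    simp only [lp.coeFn_add, Pi.add_apply, add_zero] at this ⊢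
    exact this
  smul_mem' := by
    intro c a ha
    have : Tendsto (fun n => c • (a : ∀ _ : ℕ, X) n) atTop (nhds (c • (0:X))) := ha.const_smul c
    simpa [lp.coeFn_smul] using this

instance c0_isClosed : IsClosed ((c0 X : Set (Linf X))) := by
  refine IsSeqClosed.isClosed ?_
  intro f x hf hfx
  show Tendsto (fun n => (x : ∀ _ : ℕ, X) n) atTop (nhds 0)
  rw [Metric.tendsto_atTop] at hfx ⊢
  intro ε hε
  obtain ⟨K, hK⟩ := hfx (ε / 2) (by positivity)
  have h2 : Tendsto (fun n => (f K : ∀ _ : ℕ, X) n) atTop (nhds 0) := hf K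
  rw [Metric.tendsto_atTop] at h2
  obtain ⟨N, hN⟩ := h2 (ε / 2) (by positivity)
  refine ⟨N, fun n hn => ?_⟩
  have h3 : ‖(x : ∀ _ : ℕ, X) n - (f K : ∀ _ : ℕ, X) n‖ ≤ ‖x - f K‖ := by
    have := lp.norm_apply_le_norm ENNReal.top_ne_zero (x - f K) n
    simpa [lp.coeFn_sub] using this
  have h4 : ‖x - f K‖ < ε / 2 := by
    have := hK K le_rfl
    rwa [dist_comm, dist_eq_norm] at this
  have h5 : ‖(f K : ∀ _ : ℕ, X) n‖ < ε / 2 := by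
    have := hN n hn
    rwa [dist_eq_norm, sub_zero] at this
  have : ‖(x : ∀ _ : ℕ, X) n‖ ≤ ‖(x : ∀ _ : ℕ, X) n - (f K : ∀ _ : ℕ, X) n‖ + ‖(f K : ∀ _ : ℕ, X) n‖ := by
    simpa using norm_add_le ((x : ∀ _ : ℕ, X) n - (f K : ∀ _ : ℕ, X) n) ((f K : ∀ _ : ℕ, X) n)
  rw [dist_eq_norm, sub_zero]
  calc ‖(x : ∀ _ : ℕ, X) n‖ ≤ _ + _ := this
    _ < ε / 2 + ε / 2 := add_lt_add (lt_of_le_of_lt h3 h4) h5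
    _ = ε := add_halves ε

/-- The quotient space `Y = l^∞/c₀`. -/
abbrev YQ := Linf X ⧸ c0 X

lemma c0_shift_invariant : c0 X ≤ (c0 X).comap (shiftl X) := by
  intro x hx
  have : Tendsto (fun n => (x : ∀ _ : ℕ, X) (n + 1)) atTop (nhds 0) :=
    hx.comp (tendsto_add_atTop_nat 1)
  exact this

/-- The operator `S̄` induced by the shift on the quotient `Y`, as a linear map. -/
def SbarL : YQ X →ₗ[ℂ] YQ X := (c0 X).mapQ (c0 X) (shiftl X) (c0_shift_invariant X)

/-- `S̄` as a continuous linear map on `Y`. -/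
def Sbar : YQ X →L[ℂ] YQ X :=
  (SbarL X).mkContinuous 1 (by
    intro q
    rw [one_mul]
    refine le_of_forall_pos_le_add ?_
    intro ε hε
    obtain ⟨m, hm, hlt⟩ := Submodule.Quotient.norm_mk_lt q hε
    have h1 : SbarL X q = Submodule.Quotient.mk (shiftl X m) := by
      rw [← hm]; rfl
    calc ‖SbarL X q‖ = ‖(Submodule.Quotient.mk (shiftl X m) : YQ X)‖ := by rw [h1]
      _ ≤ ‖shiftl X m‖ := Submodule.Quotient.norm_mk_le _ _
      _ ≤ ‖m‖ := by
          exact lp.norm_le_of_forall_le (norm_nonneg m) fun n =>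
            lp.norm_apply_le_norm ENNReal.top_ne_zero m (n + 1)
      _ ≤ ‖q‖ + ε := hlt.le)

/-- The spectrum of a bounded sequence `x`: the set of points `z₀` of the unit circle at
which the `Y`-valued resolvent function `λ ↦ R(λ, S̄) x̄` (defined for `|λ| ≠ 1`) has no
holomorphic extension. -/
def specSeq (x : Linf X) : Set ℂ :=
  {z₀ : ℂ | ‖z₀‖ = 1 ∧
    ¬ ∃ (U : Set ℂ) (h : ℂ → YQ X), IsOpen U ∧ z₀ ∈ U ∧ DifferentiableOn ℂ h U ∧
      ∀ z ∈ U, ‖z‖ ≠ 1 → z • h z - SbarL X (h z) = Submodule.Quotient.mk x}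

/-- every translation-bi-invariant nontrivial closed subspace of `l^∞`
contains `c₀`. -/
theorem stmt0 (F : Submodule ℂ (Linf X)) (hclosed : IsClosed (F : Set (Linf X)))
    (hne : F ≠ ⊥) (hbi : ⇑(shiftL X) ⁻¹' (F : Set (Linf X)) = (F : Set (Linf X))) :
    c0 X ≤ F := by
  intro x hx
  have hF : ∀ (N : ℕ) (y : Linf X), (∀ n, N ≤ n → (y : ∀ _ : ℕ, X) n = 0) → y ∈ F := by
    intro N
    induction N with
    | zero =>
      intro y hy
      have hy0 : y = 0 := by
        ext n; simpa using hy n (Nat.zero_le n)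
      simpa [hy0] using F.zero_mem
    | succ N ih =>
      intro y hy
      have h1 : shiftL X y ∈ F := ih _ (fun n hn => hy (n + 1) (by omega))
      have h2 : y ∈ ⇑(shiftL X) ⁻¹' (F : Set (Linf X)) := h1
      rwa [hbi] at h2
  have hcl : x ∈ closure (F : Set (Linf X)) := by
    rw [Metric.mem_closure_iff]
    intro ε hε
    have hx' : Tendsto (fun n => (x : ∀ _ : ℕ, X) n) atTop (nhds 0) := hx
    rw [Metric.tendsto_atTop] at hx'
    obtain ⟨N, hN⟩ := hx' (ε / 2) (by positivity)
    set yv : ∀ _ : ℕ, X := fun n => if n < N then (x : ∀ _ : ℕ, X) n else 0 with hyv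
    have hC0 : ∃ C, ∀ n, ‖(x : ∀ _ : ℕ, X) n‖ ≤ C := by
      obtain ⟨C, hC⟩ := memℓp_infty_iff.1 (lp.memℓp x)
      exact ⟨C, fun n => hC ⟨n, rfl⟩⟩
    have hmem : Memℓp yv ⊤ := memℓp_infty (by
      obtain ⟨C, hC⟩ := hC0
      refine ⟨C, ?_⟩
      rintro - ⟨n, rfl⟩
      by_cases h : n < N
      · simpa [hyv, h] using hC n
      · simpa [hyv, h] using le_trans (norm_nonneg _) (hC n))
    refine ⟨⟨yv, hmem⟩, hF N _ (fun n hn => by simp [hyv, Nat.not_lt.2 hn]), ?_⟩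
    rw [dist_eq_norm]
    have hle : ‖x - (⟨yv, hmem⟩ : Linf X)‖ ≤ ε / 2 := by
      refine lp.norm_le_of_forall_le (by positivity) ?_
      intro n
      have hcoe : ((x - ⟨yv, hmem⟩ : Linf X) : ∀ _ : ℕ, X) n
          = (x : ∀ _ : ℕ, X) n - yv n := by
        simp [lp.coeFn_sub] <;> rfl
      rw [hcoe]
      by_cases h : n < N
      · simp only [hyv, if_pos h, sub_self, norm_zero]
        positivity
      · have h2 := hN n (Nat.not_lt.1 h)
        rw [dist_eq_norm, sub_zero] at h2
        simp only [hyv, if_neg h, sub_zero]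
        linarith
    linarith
  rwa [hclosed.closure_eq] at hcl
end
end

section
/- Let U be an open set containing the closed disk B̄(iη, 2r), h : U → X holomorphic, and c ≥ 0, k ∈ ℕ₀ such that ‖h(z)‖ ≤ c/|Re z|^k whenever |z − iη| = 2r and Re z ≠ 0. Then ‖h(z)‖ ≤ (4/3)^k c / r^k for all z ∈ B̄(iη, r). -/
noncomputable section
open Metric

/-- a maximum-principle type estimate. If `h` is holomorphic on an open set
containing the closed disk `B̄(iη, 2r)` and `‖h(z)‖ ≤ c/|Re z|^k` on the circle
`|z - iη| = 2r` (for `Re z ≠ 0`), then `‖h(z)‖ ≤ (4/3)^k c / r^k` on `B̄(iη, r)`. -/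
theorem stmt13 (X : Type*) [NormedAddCommGroup X] [NormedSpace ℂ X] [CompleteSpace X]
    (η : ℝ) (r : ℝ) (hr : 0 < r) (U : Set ℂ) (hU : IsOpen U)
    (hsub : closedBall ((η : ℂ) * Complex.I) (2 * r) ⊆ U)
    (h : ℂ → X) (hh : DifferentiableOn ℂ h U) (c : ℝ) (hc : 0 ≤ c) (k : ℕ)
    (hbound : ∀ z : ℂ, dist z ((η : ℂ) * Complex.I) = 2 * r → z.re ≠ 0 →
      ‖h z‖ ≤ c / |z.re| ^ k) :
    ∀ z ∈ closedBall ((η : ℂ) * Complex.I) r, ‖h z‖ ≤ (4 / 3) ^ k * c / r ^ k := by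
  set w₀ : ℂ := (η : ℂ) * Complex.I with hw₀
  have hw₀re : w₀.re = 0 := by simp [hw₀]
  set p : ℂ → ℂ := fun z => ((z - w₀) ^ 2 + ((2 * r : ℝ) : ℂ) ^ 2) ^ k with hp
  set g : ℂ → X := fun z => p z • h z with hg
  have h2r : (0 : ℝ) < 2 * r := by linarith
  -- on the circle |z - w₀| = 2r, |p z| = (4 r |Re z|)^k
  have habs : ∀ z : ℂ, dist z w₀ = 2 * r →
      ‖p z‖ = (4 * r * |z.re|) ^ k := by
    intro z hz
    have hzd : ‖z - w₀‖ = 2 * r := by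
      rwa [Complex.dist_eq] at hz
    have hsq : ((2 * r : ℝ) : ℂ) ^ 2 = (z - w₀) * (starRingEnd ℂ) (z - w₀) := by
      rw [Complex.mul_conj]
      rw [Complex.normSq_eq_norm_sq, hzd]
      push_cast
      ring
    have hre : (z - w₀).re = z.re := by simp [Complex.sub_re, hw₀re]
    have hconj : (z - w₀) + (starRingEnd ℂ) (z - w₀) = 2 * (z.re : ℂ) := by
      rw [Complex.add_conj, hre]
      push_cast
      ring
    have hpz : p z = ((z - w₀) * (2 * (z.re : ℂ))) ^ k := by
      rw [hp]
      simp only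
      congr 1
      rw [hsq]
      calc (z - w₀) ^ 2 + (z - w₀) * (starRingEnd ℂ) (z - w₀)
          = (z - w₀) * ((z - w₀) + (starRingEnd ℂ) (z - w₀)) := by ring
        _ = (z - w₀) * (2 * (z.re : ℂ)) := by rw [hconj]
    rw [hpz, norm_pow, norm_mul, hzd]
    congr 1
    have h2' : ‖2 * (z.re : ℂ)‖ = 2 * |z.re| := by
      rw [norm_mul, Complex.norm_real, Real.norm_eq_abs]
      simp
    rw [h2']; ring
  -- g is bounded by (4r)^k * c on the frontier of the ball
  have hfr : ∀ z ∈ frontier (ball w₀ (2 * r)), ‖g z‖ ≤ (4 * r) ^ k * c := by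
    intro z hz
    rw [frontier_ball _ h2r.ne'] at hz
    have hzd : dist z w₀ = 2 * r := hz
    have hn : ‖g z‖ = ‖p z‖ * ‖h z‖ := norm_smul _ _
    rcases eq_or_ne z.re 0 with h0 | h0
    · rcases Nat.eq_zero_or_pos k with hk | hk
      · -- k = 0 : need ‖h z‖ ≤ c at a point with Re z = 0; use continuity along the circle
        subst hk
        rw [hn, habs z hzd]
        simp only [pow_zero, one_mul]
        have hzU : z ∈ U := hsub (by rw [mem_closedBall, hzd])
        have hcont : ContinuousAt h z :=
          (hh.differentiableAt (hU.mem_nhds hzU)).continuousAt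
        set t : ℝ := (z - w₀).im with htdef
        have hre0 : (z - w₀).re = 0 := by simp [Complex.sub_re, hw₀re, h0]
        have hzw : z - w₀ = (t : ℂ) * Complex.I := by
          apply Complex.ext <;> simp [hre0, htdef]
        have habst : |t| = 2 * r := by
          have : ‖z - w₀‖ = 2 * r := by rwa [Complex.dist_eq] at hzd
          rwa [hzw, norm_mul, Complex.norm_I, mul_one, Complex.norm_real, Real.norm_eq_abs] at this
        have ht0 : t ≠ 0 := by
          intro h'; rw [h', abs_zero] at habst; linarith
        set ε : ℕ → ℝ := fun n => 1 / (n + 1) with hε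
        set zs : ℕ → ℂ := fun n => w₀ + (z - w₀) * Complex.exp ((ε n : ℂ) * Complex.I)
          with hzs
        have hεpos : ∀ n, 0 < ε n := fun n => by positivity
        have hεle : ∀ n, ε n ≤ 1 := fun n => by
          rw [hε]; simp only
          rw [div_le_one (by positivity)]
          linarith [Nat.cast_nonneg (α := ℝ) n]
        have hεlt : ∀ n, ε n < Real.pi := fun n =>
          (hεle n).trans_lt (by linarith [Real.pi_gt_three])
        have hdist : ∀ n, dist (zs n) w₀ = 2 * r := by
          intro n
          rw [hzs]
          simp only
          rw [Complex.dist_eq, add_sub_cancel_left, norm_mul,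
            Complex.norm_exp_ofReal_mul_I, mul_one, ← Complex.dist_eq, hzd]
        have hres : ∀ n, (zs n).re = -(t * Real.sin (ε n)) := by
          intro n
          rw [hzs]
          simp only [Complex.add_re, Complex.mul_re, hzw]
          rw [Complex.exp_ofReal_mul_I_re, Complex.exp_ofReal_mul_I_im]
          simp [hw₀re, Complex.mul_re, Complex.mul_im]
        have hre_ne : ∀ n, (zs n).re ≠ 0 := by
          intro n
          rw [hres n]
          have : Real.sin (ε n) ≠ 0 :=
            (Real.sin_pos_of_pos_of_lt_pi (hεpos n) (hεlt n)).ne'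
          simp [ht0, this]
        have hbn : ∀ n, ‖h (zs n)‖ ≤ c := by
          intro n
          have := hbound (zs n) (hdist n) (hre_ne n)
          simpa using this
        have htend : Filter.Tendsto zs Filter.atTop (nhds z) := by
          have h1 : Filter.Tendsto ε Filter.atTop (nhds 0) := by
            rw [hε]
            exact tendsto_one_div_add_atTop_nhds_zero_nat
          have h2 : Continuous fun x : ℝ =>
              w₀ + (z - w₀) * Complex.exp ((x : ℂ) * Complex.I) := by
            continuity
          have h3 := (h2.continuousAt (x := (0 : ℝ))).tendsto.comp h1
          have h4 : z = w₀ + (z - w₀) * Complex.exp (((0 : ℝ) : ℂ) * Complex.I) := by simp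
          rw [← h4] at h3
          exact h3
        have htn : Filter.Tendsto (fun n => ‖h (zs n)‖) Filter.atTop (nhds ‖h z‖) :=
          (hcont.tendsto.comp htend).norm
        exact le_of_tendsto htn (Filter.Eventually.of_forall hbn)
      · rw [hn, habs z hzd, h0, abs_zero, mul_zero, zero_pow hk.ne', zero_mul]
        positivity
    · rw [hn, habs z hzd]
      have hb := hbound z hzd h0
      have h1 : (4 * r * |z.re|) ^ k * ‖h z‖ ≤ (4 * r * |z.re|) ^ k * (c / |z.re| ^ k) :=
        mul_le_mul_of_nonneg_left hb (by positivity)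
      refine h1.trans_eq ?_
      have h2 : |z.re| ≠ 0 := abs_ne_zero.mpr h0
      field_simp
      ring
  -- max principle on the closed ball
  have hcl : closure (ball w₀ (2 * r)) = closedBall w₀ (2 * r) := closure_ball _ h2r.ne'
  have hgd : DiffContOnCl ℂ g (ball w₀ (2 * r)) := by
    apply DifferentiableOn.diffContOnCl
    rw [hcl]
    exact ((differentiableOn_id.sub (differentiableOn_const _)).pow 2 |>.add
      (differentiableOn_const _)).pow k |>.smul (hh.mono hsub)
  have hmax : ∀ z ∈ closedBall w₀ (2 * r), ‖g z‖ ≤ (4 * r) ^ k * c := by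
    intro z hz
    exact Complex.norm_le_of_forall_mem_frontier_norm_le isBounded_ball hgd hfr (hcl ▸ hz)
  -- now conclude on the small ball
  intro z hz
  have hz2 : z ∈ closedBall w₀ (2 * r) := closedBall_subset_closedBall (by linarith) hz
  have hzd : ‖z - w₀‖ ≤ r := by
    rw [← Complex.dist_eq]; exact mem_closedBall.mp hz
  -- lower bound on |p z|
  have hlow : (3 * r ^ 2) ^ k ≤ ‖p z‖ := by
    rw [hp]
    simp only [norm_pow]
    apply pow_le_pow_left₀ (by positivity)
    have h1 : ‖((2 * r : ℝ) : ℂ) ^ 2‖ = 4 * r ^ 2 := by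
      rw [norm_pow, Complex.norm_real, Real.norm_eq_abs, abs_of_pos h2r]; ring
    have h2 : ‖(z - w₀) ^ 2‖ ≤ r ^ 2 := by
      rw [norm_pow]
      exact pow_le_pow_left₀ (norm_nonneg _) hzd 2
    have h3 : ‖((2 * r : ℝ) : ℂ) ^ 2‖ ≤
        ‖(z - w₀) ^ 2 + ((2 * r : ℝ) : ℂ) ^ 2‖ + ‖(z - w₀) ^ 2‖ := by
      calc ‖((2 * r : ℝ) : ℂ) ^ 2‖
          = ‖((z - w₀) ^ 2 + ((2 * r : ℝ) : ℂ) ^ 2) + (-((z - w₀) ^ 2))‖ := by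
            congr 1; ring
        _ ≤ ‖(z - w₀) ^ 2 + ((2 * r : ℝ) : ℂ) ^ 2‖
            + ‖-((z - w₀) ^ 2)‖ := norm_add_le _ _
        _ = ‖(z - w₀) ^ 2 + ((2 * r : ℝ) : ℂ) ^ 2‖
            + ‖(z - w₀) ^ 2‖ := by rw [norm_neg]
    rw [h1] at h3
    linarith
  have hgn : ‖g z‖ = ‖p z‖ * ‖h z‖ := norm_smul _ _
  have key : (3 * r ^ 2) ^ k * ‖h z‖ ≤ (4 * r) ^ k * c := by
    calc (3 * r ^ 2) ^ k * ‖h z‖ ≤ ‖p z‖ * ‖h z‖ :=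
          mul_le_mul_of_nonneg_right hlow (norm_nonneg _)
      _ = ‖g z‖ := hgn.symm
      _ ≤ (4 * r) ^ k * c := hmax z hz2
  have h3 : (0 : ℝ) < (3 * r ^ 2) ^ k := by positivity
  have hfin : ‖h z‖ ≤ (4 * r) ^ k * c / (3 * r ^ 2) ^ k := by
    rw [le_div_iff₀ h3]; linarith [key]
  refine hfin.trans_eq ?_
  rw [div_eq_div_iff h3.ne' (by positivity : (r:ℝ) ^ k ≠ 0)]
  field_simp
  rw [div_pow]
  field_simp
  ring
end
end
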